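/- Fix an integer k ≥ 1, set n = k+1, and let X₁, X₂, … be i.i.d. uniform on [n] = {1,…,n}. Fix i ∈ [k], let τ be the least r ≥ 1 with X_r = i, and let T be the least r ≥ 1 such that every element of [n] ∖ {i} appears among X₁,…,X_r. Then E[min(τ, T)] = k. -/

import Mathlib

open MeasureTheory Finset
open scoped ENNReal

/-- The first time `r ≥ 1` (as an element of `[0,∞]`, with value `∞` if there is no such time)
at which the condition `cond r ω` holds. -/
noncomputable def firstTime {Ω : Type*} (cond : ℕ → Ω → Prop) (ω : Ω) : ℝ≥0∞ :=
  sInf {x : ℝ≥0∞ | ∃ r : ℕ, x = (r : ℝ≥0∞) ∧ 1 ≤ r ∧ cond r ω}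

variable {β : Type*} [Fintype β] [DecidableEq β]

/-- number of tuples with all values in `A` covering all of `A`. -/
noncomputable def parityCnt (r : ℕ) (A : Finset β) : ℕ :=
  (univ.filter (fun a : Fin r → β =>
    (∀ j, a j ∈ A) ∧ ∀ x ∈ A, ∃ j, a j = x)).card

lemma parityCnt_zero_empty : parityCnt 0 (∅ : Finset β) = 1 := by
  classical
  rw [parityCnt]
  rw [Finset.filter_true_of_mem (by intro a _; exact ⟨fun j => j.elim0, fun x hx => by simp at hx⟩)]
  simp

lemma parityCnt_zero (A : Finset β) (hA : A.Nonempty) : parityCnt 0 A = 0 := by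
  classical
  obtain ⟨x, hx⟩ := hA
  rw [parityCnt, Finset.card_eq_zero, Finset.filter_eq_empty_iff]
  rintro a -
  rintro ⟨-, hcov⟩
  obtain ⟨j, -⟩ := hcov x hx
  exact j.elim0

lemma parityCnt_succ (r : ℕ) (A : Finset β) :
    parityCnt (r + 1) A = ∑ x ∈ A, (parityCnt r A + parityCnt r (A.erase x)) := by
  classical
  have key : (univ.filter (fun a : Fin (r+1) → β =>
      (∀ j, a j ∈ A) ∧ ∀ x ∈ A, ∃ j, a j = x)) =
      A.biUnion (fun x => (univ.filter (fun b : Fin r → β =>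
        (∀ j, b j ∈ A) ∧ ∀ y ∈ A.erase x, ∃ j, b j = y)).image (Fin.cons x)) := by
    ext a
    simp only [mem_filter, mem_univ, true_and, mem_biUnion, mem_image]
    constructor
    · rintro ⟨hmem, hcov⟩
      refine ⟨a 0, (Fin.forall_fin_succ.mp hmem).1, Fin.tail a, ⟨?_, ?_⟩, Fin.cons_self_tail a⟩
      · exact fun j => (Fin.forall_fin_succ.mp hmem).2 j
      · intro y hy
        obtain ⟨j, hj⟩ := hcov y (mem_of_mem_erase hy)
        rcases Fin.eq_zero_or_eq_succ j with rfl | ⟨j', rfl⟩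
        · exact absurd hj.symm (ne_of_mem_erase hy)
        · exact ⟨j', hj⟩
    · rintro ⟨x, hxA, b, ⟨hmem, hcov⟩, rfl⟩
      refine ⟨Fin.forall_fin_succ.mpr ⟨by simpa using hxA, fun j => by simpa using hmem j⟩, ?_⟩
      intro y hy
      by_cases hxy : y = x
      · exact ⟨0, by simpa using hxy.symm⟩
      · obtain ⟨j, hj⟩ := hcov y (mem_erase.mpr ⟨hxy, hy⟩)
        exact ⟨j.succ, by simpa using hj⟩
  rw [parityCnt, key, card_biUnion]
  · refine Finset.sum_congr rfl fun x hx => ?_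
    rw [Finset.card_image_of_injective _ (Fin.cons_right_injective (α := fun _ : Fin (r+1) => β) x)]
    -- now split the filter by whether x is attained
    have hsplit := Finset.card_filter_add_card_filter_not
      (s := (univ.filter (fun b : Fin r → β =>
        (∀ j, b j ∈ A) ∧ ∀ y ∈ A.erase x, ∃ j, b j = y)))
      (p := fun b => ∃ j, b j = x)
    rw [Finset.filter_filter, Finset.filter_filter] at hsplit
    rw [← hsplit, parityCnt, parityCnt]
    congr 1
    · apply congrArg
      apply Finset.filter_congr
      rintro b -
      constructor
      · rintro ⟨⟨hmem, hcov⟩, hx'⟩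
        refine ⟨hmem, fun y hy => ?_⟩
        by_cases hxy : y = x
        · exact hxy ▸ hx'
        · exact hcov y (mem_erase.mpr ⟨hxy, hy⟩)
      · rintro ⟨hmem, hcov⟩
        exact ⟨⟨hmem, fun y hy => hcov y (mem_of_mem_erase hy)⟩, hcov x hx⟩
    · apply congrArg
      apply Finset.filter_congr
      rintro b -
      constructor
      · rintro ⟨⟨hmem, hcov⟩, hnx⟩
        push_neg at hnx
        exact ⟨fun j => mem_erase.mpr ⟨hnx j, hmem j⟩, hcov⟩
      · rintro ⟨hmem, hcov⟩
        refine ⟨⟨fun j => mem_of_mem_erase (hmem j), hcov⟩, ?_⟩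
        rintro ⟨j, hj⟩
        exact (ne_of_mem_erase (hmem j)) hj
  · -- pairwise disjoint
    intro x hx y hy hxy
    simp only [Finset.disjoint_left, mem_image, mem_filter]
    rintro a ⟨b, -, rfl⟩ ⟨c, -, hc⟩
    exact hxy (by simpa using congrFun hc.symm 0)

lemma card_filter_mem (r : ℕ) (A : Finset β) :
    (univ.filter (fun a : Fin r → β => ∀ j, a j ∈ A)).card = A.card ^ r := by
  classical
  have : (univ.filter (fun a : Fin r → β => ∀ j, a j ∈ A)) =
      Fintype.piFinset (fun _ : Fin r => A) := by
    ext a; simp [Fintype.mem_piFinset]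
  rw [this, Fintype.card_piFinset]
  simp

lemma parityCnt_le (r : ℕ) (A : Finset β) : parityCnt r A ≤ A.card ^ r := by
  classical
  rw [← card_filter_mem r A, parityCnt]
  exact Finset.card_le_card (fun a ha => by
    simp only [mem_filter] at ha ⊢; exact ⟨ha.1, ha.2.1⟩)

lemma paritySum_lt_top (k : ℕ) (A : Finset (Fin (k+1))) (hA : A.card ≤ k) :
    (∑' r : ℕ, (parityCnt r A : ℝ≥0∞) * ((k:ℝ≥0∞)+1)⁻¹ ^ r) < ⊤ := by
  have hle : ∀ r : ℕ, (parityCnt r A : ℝ≥0∞) * ((k:ℝ≥0∞)+1)⁻¹ ^ r ≤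
      ((A.card : ℝ≥0∞) * ((k:ℝ≥0∞)+1)⁻¹) ^ r := by
    intro r
    rw [mul_pow]
    gcongr
    exact_mod_cast parityCnt_le r A
  refine lt_of_le_of_lt (ENNReal.tsum_le_tsum hle) ?_
  rw [ENNReal.tsum_geometric]
  refine ENNReal.inv_lt_top.mpr (tsub_pos_of_lt ?_)
  rw [← div_eq_mul_inv]
  rw [ENNReal.div_lt_iff (Or.inl (by intro h; simp at h)) (Or.inl (by simp))]
  rw [one_mul]
  exact_mod_cast Nat.lt_succ_of_le hA

lemma paritySum_rec (k : ℕ) (A : Finset (Fin (k+1))) (hne : A.Nonempty) :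
    (∑' r : ℕ, (parityCnt r A : ℝ≥0∞) * ((k:ℝ≥0∞)+1)⁻¹ ^ r) =
      (∑ x ∈ A, ((∑' r : ℕ, (parityCnt r A : ℝ≥0∞) * ((k:ℝ≥0∞)+1)⁻¹ ^ r) +
        ∑' r : ℕ, (parityCnt r (A.erase x) : ℝ≥0∞) * ((k:ℝ≥0∞)+1)⁻¹ ^ r)) *
        ((k:ℝ≥0∞)+1)⁻¹ := by
  classical
  set p : ℝ≥0∞ := ((k:ℝ≥0∞)+1)⁻¹ with hp
  calc ∑' r : ℕ, (parityCnt r A : ℝ≥0∞) * p ^ r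
      = (parityCnt 0 A : ℝ≥0∞) * p ^ 0 +
        ∑' r : ℕ, (parityCnt (r+1) A : ℝ≥0∞) * p ^ (r+1) :=
        tsum_eq_zero_add' ENNReal.summable
    _ = ∑' r : ℕ, (parityCnt (r+1) A : ℝ≥0∞) * p ^ (r+1) := by
        rw [parityCnt_zero A hne]; simp
    _ = ∑' r : ℕ, (∑ x ∈ A, (((parityCnt r A : ℝ≥0∞) +
          (parityCnt r (A.erase x) : ℝ≥0∞)) * p ^ r)) * p := by
        refine tsum_congr fun r => ?_
        rw [parityCnt_succ, Nat.cast_sum, pow_succ, ← mul_assoc, Finset.sum_mul]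
        congr 1
        refine Finset.sum_congr rfl fun x _ => ?_
        push_cast
        ring
    _ = (∑' r : ℕ, ∑ x ∈ A, (((parityCnt r A : ℝ≥0∞) +
          (parityCnt r (A.erase x) : ℝ≥0∞)) * p ^ r)) * p := ENNReal.tsum_mul_right
    _ = (∑ x ∈ A, ∑' r : ℕ, (((parityCnt r A : ℝ≥0∞) +
          (parityCnt r (A.erase x) : ℝ≥0∞)) * p ^ r)) * p := by
        rw [Summable.tsum_finsetSum (fun x _ => ENNReal.summable)]
    _ = _ := by
        congr 1
        refine Finset.sum_congr rfl fun x _ => ?_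
        rw [← ENNReal.tsum_add]
        exact tsum_congr fun r => add_mul _ _ _

lemma paritySum_spec (k : ℕ) (A : Finset (Fin (k+1))) :
    A.card ≤ k →
    (∑' r : ℕ, (parityCnt r A : ℝ≥0∞) * ((k:ℝ≥0∞)+1)⁻¹ ^ r) *
      ∏ m ∈ range A.card, ((k - m : ℕ) : ℝ≥0∞) = (A.card.factorial : ℝ≥0∞) := by
  classical
  induction A using Finset.strongInduction with
  | _ A IH =>
  intro hA
  by_cases hemp : A = ∅
  · subst hemp
    rw [Finset.card_empty, Finset.prod_range_zero, mul_one]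
    rw [tsum_eq_single 0 (fun r hr => ?_)]
    · simp [parityCnt_zero_empty]
    · obtain ⟨s, rfl⟩ := Nat.exists_eq_succ_of_ne_zero hr
      rw [parityCnt_succ]
      simp
  · have hne : A.Nonempty := Finset.nonempty_of_ne_empty hemp
    set p : ℝ≥0∞ := ((k:ℝ≥0∞)+1)⁻¹ with hp
    set c := A.card with hc
    have hc1 : 1 ≤ c := Finset.card_pos.mpr hne
    set S : ℝ≥0∞ := ∑' r : ℕ, (parityCnt r A : ℝ≥0∞) * p ^ r with hS
    have hSlt : S < ⊤ := paritySum_lt_top k A hA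
    have hk1ne : ((k:ℝ≥0∞)+1) ≠ 0 := by intro h; simp at h
    have hk1nt : ((k:ℝ≥0∞)+1) ≠ ⊤ := by
      exact_mod_cast ENNReal.natCast_ne_top (k+1)
    have hrec := paritySum_rec k A hne
    set B : ℝ≥0∞ := ∑ x ∈ A, ∑' r : ℕ, (parityCnt r (A.erase x) : ℝ≥0∞) * p ^ r with hB
    have hmain : ((k:ℝ≥0∞)+1) * S = (c : ℝ≥0∞) * S + B := by
      calc ((k:ℝ≥0∞)+1) * S
          = ((k:ℝ≥0∞)+1) * ((∑ x ∈ A, (S + ∑' r : ℕ,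
              (parityCnt r (A.erase x) : ℝ≥0∞) * p ^ r)) * p) := by rw [← hrec]
        _ = (((k:ℝ≥0∞)+1) * p) * (∑ x ∈ A, (S + ∑' r : ℕ,
              (parityCnt r (A.erase x) : ℝ≥0∞) * p ^ r)) := by ring
        _ = ∑ x ∈ A, (S + ∑' r : ℕ,
              (parityCnt r (A.erase x) : ℝ≥0∞) * p ^ r) := by
            rw [ENNReal.mul_inv_cancel hk1ne hk1nt, one_mul]
        _ = (c : ℝ≥0∞) * S + B := by
            rw [Finset.sum_add_distrib, Finset.sum_const, ← hc, nsmul_eq_mul, hB]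
    set Q : ℝ≥0∞ := ∏ m ∈ range (c-1), ((k - m : ℕ) : ℝ≥0∞) with hQ
    have hQnt : Q ≠ ⊤ := by
      rw [hQ, ← Nat.cast_prod]
      exact ENNReal.natCast_ne_top _
    have hIH : ∀ x ∈ A, (∑' r : ℕ, (parityCnt r (A.erase x) : ℝ≥0∞) * p ^ r) * Q =
        ((c-1).factorial : ℝ≥0∞) := by
      intro x hx
      have hcard : (A.erase x).card = c - 1 := by rw [Finset.card_erase_of_mem hx, hc]
      have := IH (A.erase x) (Finset.erase_ssubset hx) (by omega)
      rwa [hcard] at this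
    have hBQ : B * Q = (c : ℝ≥0∞) * ((c-1).factorial : ℝ≥0∞) := by
      rw [hB, Finset.sum_mul]
      rw [Finset.sum_congr rfl hIH, Finset.sum_const, ← hc, nsmul_eq_mul]
    have hcast : (((k+1-c : ℕ) : ℝ≥0∞) + (c : ℝ≥0∞)) = ((k:ℝ≥0∞)+1) := by
      rw [← Nat.cast_add]
      have : (k+1-c) + c = k + 1 := by omega
      rw [this]
      push_cast
      ring
    have hmainQ : ((k+1-c : ℕ) : ℝ≥0∞) * (S * Q) + (c : ℝ≥0∞) * (S * Q) =
        (c : ℝ≥0∞) * (S * Q) + (c : ℝ≥0∞) * ((c-1).factorial : ℝ≥0∞) := by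
      calc ((k+1-c : ℕ) : ℝ≥0∞) * (S * Q) + (c : ℝ≥0∞) * (S * Q)
          = (((k+1-c : ℕ) : ℝ≥0∞) + (c : ℝ≥0∞)) * (S * Q) := by ring
        _ = (((k:ℝ≥0∞)+1) * S) * Q := by rw [hcast]; ring
        _ = ((c : ℝ≥0∞) * S + B) * Q := by rw [hmain]
        _ = (c : ℝ≥0∞) * (S * Q) + B * Q := by ring
        _ = _ := by rw [hBQ]
    have hSQnt : (c : ℝ≥0∞) * (S * Q) ≠ ⊤ :=
      ENNReal.mul_ne_top (ENNReal.natCast_ne_top c)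
        (ENNReal.mul_ne_top hSlt.ne hQnt)
    have hkey : ((k+1-c : ℕ) : ℝ≥0∞) * (S * Q) =
        (c : ℝ≥0∞) * ((c-1).factorial : ℝ≥0∞) := by
      have h := hmainQ
      rw [add_comm (((k+1-c : ℕ) : ℝ≥0∞) * (S * Q)) _] at h
      exact (ENNReal.add_right_inj hSQnt).mp h
    have hprod : ∏ m ∈ range c, ((k - m : ℕ) : ℝ≥0∞) = Q * ((k - (c-1) : ℕ) : ℝ≥0∞) := by
      conv_lhs => rw [show c = (c-1)+1 by omega]
      rw [Finset.prod_range_succ, hQ]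
    have hfact : (c.factorial : ℝ≥0∞) = (c : ℝ≥0∞) * ((c-1).factorial : ℝ≥0∞) := by
      rw [← Nat.cast_mul, Nat.mul_factorial_pred (by omega)]
    rw [hprod, hfact, ← hkey]
    have heq : (k+1-c : ℕ) = (k - (c-1) : ℕ) := by omega
    rw [heq]
    ring



lemma firstTime_min {Ω : Type*} (c₁ c₂ : ℕ → Ω → Prop) (ω : Ω) :
    min (firstTime c₁ ω) (firstTime c₂ ω) =
      firstTime (fun r ω => c₁ r ω ∨ c₂ r ω) ω := by
  rw [firstTime, firstTime, firstTime, ← sInf_union]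
  congr 1
  ext x
  simp only [Set.mem_union, Set.mem_setOf_eq]
  constructor
  · rintro (⟨r, hx, hr, hc⟩ | ⟨r, hx, hr, hc⟩)
    exacts [⟨r, hx, hr, Or.inl hc⟩, ⟨r, hx, hr, Or.inr hc⟩]
  · rintro ⟨r, hx, hr, hc | hc⟩
    exacts [Or.inl ⟨r, hx, hr, hc⟩, Or.inr ⟨r, hx, hr, hc⟩]

lemma lt_firstTime_iff {Ω : Type*} {cond : ℕ → Ω → Prop} {ω : Ω}
    (hmono : ∀ s r : ℕ, s ≤ r → cond s ω → cond r ω) (h0 : ¬ cond 0 ω) (r : ℕ) :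
    (r : ℝ≥0∞) < firstTime cond ω ↔ ¬ cond r ω := by
  constructor
  · intro hlt hc
    have hr1 : 1 ≤ r := by
      rcases Nat.eq_zero_or_pos r with rfl | h
      · exact absurd hc h0
      · exact h
    exact absurd (sInf_le ⟨r, rfl, hr1, hc⟩ : firstTime cond ω ≤ (r : ℝ≥0∞))
      (not_le.mpr hlt)
  · intro hnc
    have : ((r+1 : ℕ) : ℝ≥0∞) ≤ firstTime cond ω := by
      refine le_sInf ?_
      rintro x ⟨s, rfl, hs1, hcs⟩
      have : r < s := by
        by_contra h
        exact hnc (hmono s r (not_lt.mp h) hcs)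
      exact_mod_cast this
    refine lt_of_lt_of_le ?_ this
    exact_mod_cast Nat.lt_succ_self r

lemma firstTime_nat_or_top {Ω : Type*} (cond : ℕ → Ω → Prop) (ω : Ω) :
    firstTime cond ω = ⊤ ∨ ∃ n : ℕ, firstTime cond ω = (n : ℝ≥0∞) := by
  by_cases h : ∃ r : ℕ, 1 ≤ r ∧ cond r ω
  · right
    classical
    refine ⟨Nat.find h, le_antisymm ?_ ?_⟩
    · exact sInf_le ⟨Nat.find h, rfl, (Nat.find_spec h).1, (Nat.find_spec h).2⟩
    · refine le_sInf ?_
      rintro x ⟨s, rfl, hs1, hcs⟩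
      exact_mod_cast Nat.find_min' h ⟨hs1, hcs⟩
  · left
    rw [firstTime]
    refine (congrArg sInf ?_).trans sInf_empty
    rw [Set.eq_empty_iff_forall_notMem]
    rintro x ⟨r, rfl, hr1, hcr⟩
    exact h ⟨r, hr1, hcr⟩

lemma tsum_ite_lt_eq_self (x : ℝ≥0∞) (h : x = ⊤ ∨ ∃ n : ℕ, x = (n : ℝ≥0∞)) :
    ∑' r : ℕ, (if (r : ℝ≥0∞) < x then (1 : ℝ≥0∞) else 0) = x := by
  rcases h with rfl | ⟨n, rfl⟩
  · have : ∀ r : ℕ, (if (r : ℝ≥0∞) < ⊤ then (1 : ℝ≥0∞) else 0) = 1 := fun r => by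
      rw [if_pos (ENNReal.natCast_lt_top r)]
    rw [tsum_congr this]
    exact ENNReal.tsum_const_eq_top_of_ne_zero one_ne_zero
  · have h1 : ∀ r : ℕ, (if (r : ℝ≥0∞) < (n : ℝ≥0∞) then (1 : ℝ≥0∞) else 0) =
        (if r < n then (1 : ℝ≥0∞) else 0) := fun r => by
      congr 1
      simp [Nat.cast_lt]
    rw [tsum_congr h1, tsum_eq_sum (s := Finset.range n) (fun r hr => by
      rw [if_neg (by simpa using hr)])]
    rw [Finset.sum_congr rfl (fun r hr => if_pos (Finset.mem_range.mp hr))]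
    simp


lemma paritySum_one (k : ℕ) (hk : 1 ≤ k) (i : Fin (k+1)) :
    ∑' r : ℕ, (parityCnt r ((univ : Finset (Fin (k+1))).erase i) : ℝ≥0∞) *
      ((k:ℝ≥0∞)+1)⁻¹ ^ r = 1 := by
  have hcard : ((univ : Finset (Fin (k+1))).erase i).card = k := by
    rw [card_erase_of_mem (mem_univ i), card_univ, Fintype.card_fin]
    omega
  have hspec := paritySum_spec k ((univ : Finset (Fin (k+1))).erase i) (le_of_eq hcard)
  rw [hcard] at hspec
  have hprodnat : ∏ m ∈ range k, (k - m) = k.factorial := by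
    calc ∏ m ∈ range k, (k - m) = ∏ m ∈ range k, (m + 1) := by
          rw [← Finset.prod_range_reflect]
          exact Finset.prod_congr rfl fun j hj => by
            have := Finset.mem_range.mp hj; omega
      _ = k.factorial := Finset.prod_range_add_one_eq_factorial k
  have hprod : (∏ m ∈ range k, ((k - m : ℕ) : ℝ≥0∞)) = (k.factorial : ℝ≥0∞) := by
    rw [← Nat.cast_prod, hprodnat]
  rw [hprod] at hspec
  have hfne : (k.factorial : ℝ≥0∞) ≠ 0 := by
    exact_mod_cast k.factorial_pos.ne'
  have hfnt : (k.factorial : ℝ≥0∞) ≠ ⊤ := ENNReal.natCast_ne_top _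
  set S : ℝ≥0∞ := ∑' r : ℕ, (parityCnt r ((univ : Finset (Fin (k+1))).erase i) : ℝ≥0∞) *
      ((k:ℝ≥0∞)+1)⁻¹ ^ r with hS
  calc S = S * ((k.factorial : ℝ≥0∞) * ((k.factorial : ℝ≥0∞))⁻¹) := by
        rw [ENNReal.mul_inv_cancel hfne hfnt, mul_one]
    _ = (S * (k.factorial : ℝ≥0∞)) * ((k.factorial : ℝ≥0∞))⁻¹ := by ring
    _ = (k.factorial : ℝ≥0∞) * ((k.factorial : ℝ≥0∞))⁻¹ := by rw [hspec]
    _ = 1 := ENNReal.mul_inv_cancel hfne hfnt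

lemma cylinder_measure (k : ℕ) (μ : Measure (ℕ → Fin (k+1)))
    (hμ : ∀ (m : ℕ) (a : Fin m → Fin (k + 1)),
      μ {ω : ℕ → Fin (k + 1) | ∀ i : Fin m, ω (i : ℕ) = a i} =
        ∏ _i : Fin m, (((k : ℝ≥0∞) + 1))⁻¹)
    (r : ℕ) (P : (Fin r → Fin (k+1)) → Prop) [DecidablePred P] :
    μ {ω : ℕ → Fin (k+1) | P (fun j : Fin r => ω (j : ℕ))} =
      ((univ.filter P).card : ℝ≥0∞) * ((k:ℝ≥0∞)+1)⁻¹ ^ r := by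
  have hmeas : ∀ a : Fin r → Fin (k+1),
      MeasurableSet {ω : ℕ → Fin (k+1) | ∀ j : Fin r, ω (j:ℕ) = a j} := by
    intro a
    have : {ω : ℕ → Fin (k+1) | ∀ j : Fin r, ω (j:ℕ) = a j} =
        ⋂ j : Fin r, (fun ω : ℕ → Fin (k+1) => ω (j:ℕ)) ⁻¹' {a j} := by
      ext ω; simp
    rw [this]
    exact MeasurableSet.iInter fun j =>
      (measurable_pi_apply _) (measurableSet_singleton _)
  have hset : {ω : ℕ → Fin (k+1) | P (fun j : Fin r => ω (j : ℕ))} =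
      ⋃ (a : Fin r → Fin (k+1)) (_ : a ∈ univ.filter P),
        {ω : ℕ → Fin (k+1) | ∀ j : Fin r, ω (j:ℕ) = a j} := by
    ext ω
    simp only [Set.mem_setOf_eq, Set.mem_iUnion]
    constructor
    · intro h
      exact ⟨fun j => ω (j:ℕ), by simpa using h, fun j => rfl⟩
    · rintro ⟨a, ha, haω⟩
      have : (fun j : Fin r => ω (j:ℕ)) = a := funext haω
      rw [this]
      simpa using ha
  have hdisj : (↑(univ.filter P) : Set (Fin r → Fin (k+1))).PairwiseDisjoint
      (fun a => {ω : ℕ → Fin (k+1) | ∀ j : Fin r, ω (j:ℕ) = a j}) := by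
    intro a _ b _ hab
    rw [Function.onFun, Set.disjoint_left]
    intro ω hωa hωb
    exact hab (funext fun j => (hωa j).symm.trans (hωb j))
  rw [hset, measure_biUnion_finset hdisj (fun a _ => hmeas a)]
  have hone : ∀ a : Fin r → Fin (k+1),
      μ {ω : ℕ → Fin (k+1) | ∀ j : Fin r, ω (j:ℕ) = a j} = ((k:ℝ≥0∞)+1)⁻¹ ^ r := by
    intro a
    rw [hμ r a, Finset.prod_const, card_univ, Fintype.card_fin]
  rw [Finset.sum_congr rfl (fun a _ => hone a), Finset.sum_const, nsmul_eq_mul]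

/-- Fix `k ≥ 1`, set `n = k+1`, and let `X₁, X₂, …` be i.i.d. uniform on `[n]` (the coordinate
process on `[n]^ℕ` under the infinite uniform product measure `μ`, characterized by its values
on cylinder sets).  Fix `i ∈ [k]`, let `τ` be the least `r ≥ 1` with `X_r = i` and `T` the
least `r ≥ 1` such that every element of `[n] ∖ {i}` appears among `X₁,…,X_r`.  Then
`E[min(τ, T)] = k` (the expected random-access sample size of the simple parity code). -/
theorem simple_parity_code_expected_retrieval_time (k : ℕ) (hk : 1 ≤ k)
    (μ : Measure (ℕ → Fin (k + 1)))
    (hμ : ∀ (m : ℕ) (a : Fin m → Fin (k + 1)),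
      μ {ω : ℕ → Fin (k + 1) | ∀ i : Fin m, ω (i : ℕ) = a i} =
        ∏ _i : Fin m, (((k : ℝ≥0∞) + 1))⁻¹)
    (i : Fin (k + 1)) (hi : (i : ℕ) < k) :
    ∫⁻ ω, min (firstTime (fun r ω => ∃ j : Fin r, ω (j : ℕ) = i) ω)
        (firstTime (fun r ω => ∀ i' : Fin (k + 1), i' ≠ i → ∃ j : Fin r, ω (j : ℕ) = i') ω) ∂μ =
      (k : ℝ≥0∞) := by
  classical
  set p : ℝ≥0∞ := ((k:ℝ≥0∞)+1)⁻¹ with hp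
  set A : Finset (Fin (k+1)) := (univ : Finset (Fin (k+1))).erase i with hA
  set cond : ℕ → (ℕ → Fin (k+1)) → Prop := fun r ω =>
    (∃ j : Fin r, ω (j : ℕ) = i) ∨ ∀ i' : Fin (k+1), i' ≠ i → ∃ j : Fin r, ω (j : ℕ) = i'
    with hcond
  have hmono : ∀ (ω : ℕ → Fin (k+1)) (s r : ℕ), s ≤ r → cond s ω → cond r ω := by
    intro ω s r hsr h
    rcases h with ⟨j, hj⟩ | h
    · exact Or.inl ⟨Fin.castLE hsr j, by simpa using hj⟩
    · refine Or.inr fun i' hi' => ?_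
      obtain ⟨j, hj⟩ := h i' hi'
      exact ⟨Fin.castLE hsr j, by simpa using hj⟩
  have h0 : ∀ ω : ℕ → Fin (k+1), ¬ cond 0 ω := by
    intro ω h
    rcases h with ⟨j, -⟩ | h
    · exact j.elim0
    · obtain ⟨i', hi'⟩ := Fintype.exists_ne_of_one_lt_card
        (by rw [Fintype.card_fin]; omega) i
      obtain ⟨j, -⟩ := h i' hi'
      exact j.elim0
  -- bad sets
  set B : ℕ → Set (ℕ → Fin (k+1)) := fun r => {ω | ¬ cond r ω} with hBdef
  have hBcyl : ∀ r : ℕ, B r = {ω : ℕ → Fin (k+1) |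
      (fun a : Fin r → Fin (k+1) => (∀ j, a j ∈ A) ∧ ¬ ∀ x ∈ A, ∃ j, a j = x)
        (fun j : Fin r => ω (j : ℕ))} := by
    intro r
    ext ω
    simp only [hBdef, Set.mem_setOf_eq, hcond, hA, not_or, not_exists, mem_erase, mem_univ,
      and_true]
  have hBmeas : ∀ r : ℕ, MeasurableSet (B r) := by
    intro r
    rw [hBcyl r]
    have : {ω : ℕ → Fin (k+1) |
        (fun a : Fin r → Fin (k+1) => (∀ j, a j ∈ A) ∧ ¬ ∀ x ∈ A, ∃ j, a j = x)
          (fun j : Fin r => ω (j : ℕ))} =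
        (fun (ω : ℕ → Fin (k+1)) (j : Fin r) => ω (j:ℕ)) ⁻¹'
          {a : Fin r → Fin (k+1) | (∀ j, a j ∈ A) ∧ ¬ ∀ x ∈ A, ∃ j, a j = x} := rfl
    rw [this]
    exact (measurable_pi_lambda (fun (ω : ℕ → Fin (k+1)) (j : Fin r) => ω (j:ℕ))
      (fun j => measurable_pi_apply _)) ((Set.to_countable _).measurableSet)
  -- pointwise layer-cake identity
  have hpt : ∀ ω : ℕ → Fin (k+1),
      min (firstTime (fun r ω => ∃ j : Fin r, ω (j : ℕ) = i) ω)
        (firstTime (fun r ω => ∀ i' : Fin (k + 1), i' ≠ i → ∃ j : Fin r, ω (j : ℕ) = i') ω) =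
      ∑' r : ℕ, (B r).indicator (fun _ => (1:ℝ≥0∞)) ω := by
    intro ω
    rw [firstTime_min]
    have hft : firstTime (fun r ω => (∃ j : Fin r, ω (j : ℕ) = i) ∨
        ∀ i' : Fin (k+1), i' ≠ i → ∃ j : Fin r, ω (j : ℕ) = i') ω = firstTime cond ω := rfl
    rw [hft, ← tsum_ite_lt_eq_self (firstTime cond ω) (firstTime_nat_or_top cond ω)]
    refine tsum_congr fun r => ?_
    rw [Set.indicator_apply]
    congr 1
    simp only [lt_firstTime_iff (hmono ω) (h0 ω) r, hBdef, Set.mem_setOf_eq]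
  rw [lintegral_congr hpt,
    lintegral_tsum (fun r => ((measurable_const.indicator (hBmeas r)).aemeasurable))]
  have hint : ∀ r : ℕ, ∫⁻ ω, (B r).indicator (fun _ => (1:ℝ≥0∞)) ω ∂μ = μ (B r) := by
    intro r
    exact lintegral_indicator_one (hBmeas r)
  rw [tsum_congr hint]
  -- measure of B r
  have hmeasB : ∀ r : ℕ, μ (B r) =
      (((univ : Finset (Fin r → Fin (k+1))).filter
        (fun a => (∀ j, a j ∈ A) ∧ ¬ ∀ x ∈ A, ∃ j, a j = x)).card : ℝ≥0∞) * p ^ r := by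
    intro r
    rw [hBcyl r]
    exact cylinder_measure k μ hμ r (fun a => (∀ j, a j ∈ A) ∧ ¬ ∀ x ∈ A, ∃ j, a j = x)
  rw [tsum_congr hmeasB]
  -- counting identity
  have hAcard : A.card = k := by
    rw [hA, card_erase_of_mem (mem_univ i), card_univ, Fintype.card_fin]
    omega
  have hcnt : ∀ r : ℕ,
      (((univ : Finset (Fin r → Fin (k+1))).filter
        (fun a => (∀ j, a j ∈ A) ∧ ¬ ∀ x ∈ A, ∃ j, a j = x)).card) + parityCnt r A = k ^ r := by
    intro r
    have h := Finset.card_filter_add_card_filter_not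
      (s := (univ : Finset (Fin r → Fin (k+1))).filter (fun a => ∀ j, a j ∈ A))
      (p := fun a => ∀ x ∈ A, ∃ j, a j = x)
    rw [Finset.filter_filter, Finset.filter_filter, card_filter_mem, hAcard] at h
    rw [add_comm, parityCnt]
    convert h using 3
    exact Finset.filter_congr_decidable _ _ _
  -- sum up
  have hsplit : ∀ r : ℕ,
      ((((univ : Finset (Fin r → Fin (k+1))).filter
        (fun a => (∀ j, a j ∈ A) ∧ ¬ ∀ x ∈ A, ∃ j, a j = x)).card : ℝ≥0∞)) * p ^ r +
      (parityCnt r A : ℝ≥0∞) * p ^ r = ((k:ℝ≥0∞) * p) ^ r := by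
    intro r
    rw [← add_mul, ← Nat.cast_add, hcnt r, mul_pow, Nat.cast_pow]
  set D : ℝ≥0∞ := ∑' r : ℕ, ((((univ : Finset (Fin r → Fin (k+1))).filter
      (fun a => (∀ j, a j ∈ A) ∧ ¬ ∀ x ∈ A, ∃ j, a j = x)).card : ℝ≥0∞)) * p ^ r with hDdef
  have hS1 : (∑' r : ℕ, (parityCnt r A : ℝ≥0∞) * p ^ r) = 1 := by
    have := paritySum_one k hk i
    rw [← hA, ← hp] at this
    exact this
  have hk1ne : ((k:ℝ≥0∞)+1) ≠ 0 := by intro h; simp at h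
  have hk1nt : ((k:ℝ≥0∞)+1) ≠ ⊤ := by exact_mod_cast ENNReal.natCast_ne_top (k+1)
  have hgeo : ∑' r : ℕ, ((k:ℝ≥0∞) * p) ^ r = (k:ℝ≥0∞) + 1 := by
    rw [ENNReal.tsum_geometric]
    have h1 : (1:ℝ≥0∞) - (k:ℝ≥0∞) * p = p := by
      refine ENNReal.sub_eq_of_eq_add (ENNReal.mul_ne_top (ENNReal.natCast_ne_top k)
        (by rw [hp]; exact ENNReal.inv_ne_top.mpr hk1ne)) ?_
      rw [hp]
      calc (1:ℝ≥0∞) = ((k:ℝ≥0∞)+1) * ((k:ℝ≥0∞)+1)⁻¹ :=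
            (ENNReal.mul_inv_cancel hk1ne hk1nt).symm
        _ = ((k:ℝ≥0∞)+1)⁻¹ + (k:ℝ≥0∞) * ((k:ℝ≥0∞)+1)⁻¹ := by ring
    rw [h1, hp, inv_inv]
  have hDS : D + (∑' r : ℕ, (parityCnt r A : ℝ≥0∞) * p ^ r) = (k:ℝ≥0∞) + 1 := by
    rw [hDdef, ← ENNReal.tsum_add, tsum_congr hsplit, hgeo]
  rw [hS1] at hDS
  have hfin : (1:ℝ≥0∞) + D = 1 + (k:ℝ≥0∞) := by
    rw [add_comm (1:ℝ≥0∞) D, add_comm (1:ℝ≥0∞) (k:ℝ≥0∞)]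
    exact hDS
  exact (ENNReal.add_right_inj ENNReal.one_ne_top).mp hfin
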